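/- Let G be a maximal permutation graph on n vertices, where n ≥ 3. Let m_n be the unique positive integer with m_n! < n ≤ (m_n + 1)!, and for each h with 2 ≤ h ≤ m_n − 1 let i_h be the largest integer i with i > h and P(i, h) ≤ n. Then the number of edges of G satisfies |E(G)| ≤ n(n−1)/2 − Σ_{h=2}^{m_n − 1} (i_h − h). -/

import Mathlib

/-- The label assigned to the edge `{u, v}` by the vertex labeling `f`
(with labels `1, …, n`): `P(max, min)`, where `max`/`min` are the larger
and smaller of the two vertex labels `f u + 1`, `f v + 1`. -/
def permEdgeLabel {n : ℕ} (f : Fin n ≃ Fin n) (u v : Fin n) : ℕ :=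
  Nat.descFactorial (max ((f u : ℕ) + 1) ((f v : ℕ) + 1))
    (min ((f u : ℕ) + 1) ((f v : ℕ) + 1))

/-- A simple graph on `n` vertices is a permutation graph if there is a
bijective labeling of its vertices by `1, …, n` such that the induced edge
labeling (by falling factorials) is injective on the edge set. -/
def IsPermutationGraph {n : ℕ} (G : SimpleGraph (Fin n)) : Prop :=
  ∃ f : Fin n ≃ Fin n, ∀ u v u' v' : Fin n, G.Adj u v → G.Adj u' v' →
    permEdgeLabel f u v = permEdgeLabel f u' v' → s(u, v) = s(u', v')

/-- A permutation graph is maximal if adding any new edge destroys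
permutability. -/
def IsMaximalPermutationGraph {n : ℕ} (G : SimpleGraph (Fin n)) : Prop :=
  IsPermutationGraph G ∧ ∀ u v : Fin n, u ≠ v → ¬ G.Adj u v →
    ¬ IsPermutationGraph (G ⊔ SimpleGraph.edge u v)

lemma self_le_descFactorial (j : ℕ) : ∀ h : ℕ, 0 < h → h ≤ j → j ≤ Nat.descFactorial j h := by
  intro h
  induction h with
  | zero => omega
  | succ k ih =>
    intro _ hkj
    rcases Nat.eq_zero_or_pos k with rfl | hk
    · simp [Nat.descFactorial_one]
    · rw [Nat.descFactorial_succ]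
      calc j ≤ Nat.descFactorial j k := ih hk (by omega)
        _ ≤ (j - k) * Nat.descFactorial j k :=
          Nat.le_mul_of_pos_left _ (by omega)

/-- If `G` is a maximal permutation graph on `n ≥ 3` vertices, `m` is the
unique positive integer with `m! < n ≤ (m+1)!`, and for each `2 ≤ h ≤ m − 1`
`i h` is the largest integer `i > h` with `P(i, h) ≤ n`, then
`|E(G)| ≤ n(n−1)/2 − Σ_{h=2}^{m−1} (i h − h)`. -/
theorem edge_count_upper_bound (n : ℕ) (hn : 3 ≤ n) (G : SimpleGraph (Fin n))
    (hG : IsMaximalPermutationGraph G)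
    (m : ℕ) (hm : 0 < m) (hm₁ : Nat.factorial m < n)
    (hm₂ : n ≤ Nat.factorial (m + 1))
    (i : ℕ → ℕ)
    (hi : ∀ h : ℕ, 2 ≤ h → h ≤ m - 1 →
      h < i h ∧ Nat.descFactorial (i h) h ≤ n ∧
        ∀ j : ℕ, h < j → Nat.descFactorial j h ≤ n → j ≤ i h) :
    G.edgeSet.ncard ≤ n * (n - 1) / 2 - ∑ h ∈ Finset.Icc 2 (m - 1), (i h - h) := by
  classical
  obtain ⟨f, hf⟩ := hG.1
  haveI : NeZero n := ⟨by omega⟩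
  set vtx : ℕ → Fin n := fun a => f.symm (Fin.ofNat n (a - 1)) with hvtx
  have hval : ∀ a : ℕ, 1 ≤ a → a ≤ n → ((f (vtx a) : ℕ)) + 1 = a := by
    intro a h1 h2
    have : f (vtx a) = Fin.ofNat n (a - 1) := f.apply_symm_apply _
    rw [this, Fin.val_ofNat, Nat.mod_eq_of_lt (by omega)]
    omega
  have hinjv : ∀ a b : ℕ, 1 ≤ a → a ≤ n → 1 ≤ b → b ≤ n → vtx a = vtx b → a = b := by
    intro a b ha1 ha2 hb1 hb2 hab
    have h1 := hval a ha1 ha2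
    have h2 := hval b hb1 hb2
    rw [hab] at h1
    omega
  have hlab : ∀ a b : ℕ, 1 ≤ a → a ≤ n → 1 ≤ b → b ≤ n →
      permEdgeLabel f (vtx a) (vtx b) = Nat.descFactorial (max a b) (min a b) := by
    intro a b ha1 ha2 hb1 hb2
    unfold permEdgeLabel
    rw [hval a ha1 ha2, hval b hb1 hb2]
  -- the index set
  set T : Finset ((_ : ℕ) × ℕ) :=
    (Finset.Icc 2 (m - 1)).sigma (fun h => Finset.Ioc h (i h)) with hT
  have hTcard : T.card = ∑ h ∈ Finset.Icc 2 (m - 1), (i h - h) := by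
    rw [hT, Finset.card_sigma]
    exact Finset.sum_congr rfl fun h _ => Nat.card_Ioc h (i h)
  -- basic bounds for a member of T
  have hbounds : ∀ h j : ℕ, (⟨h, j⟩ : (_ : ℕ) × ℕ) ∈ T →
      2 ≤ h ∧ h < j ∧ j ≤ n ∧ j ≤ Nat.descFactorial j h ∧
        Nat.descFactorial j h ≤ n := by
    intro h j hp
    rw [hT, Finset.mem_sigma, Finset.mem_Icc, Finset.mem_Ioc] at hp
    dsimp only at hp
    obtain ⟨⟨h2, hhm⟩, hj1, hj2⟩ := hp
    obtain ⟨hih, hPn, -⟩ := hi h h2 hhm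
    have hPj : Nat.descFactorial j h ≤ n :=
      le_trans (Nat.descFactorial_le h hj2) hPn
    have hjP : j ≤ Nat.descFactorial j h :=
      self_le_descFactorial j h (by omega) (by omega)
    exact ⟨h2, hj1, by omega, hjP, hPj⟩
  -- label of a pair {h, j} with h < j
  have hlab' : ∀ h j : ℕ, 1 ≤ h → h < j → j ≤ n →
      permEdgeLabel f (vtx h) (vtx j) = Nat.descFactorial j h := by
    intro h j h1 h2 h3
    rw [hlab h j h1 (by omega) (by omega) h3, max_eq_right (by omega),
      min_eq_left (by omega)]
  -- label of a pair {1, p}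
  have hlab1 : ∀ p : ℕ, 2 ≤ p → p ≤ n →
      permEdgeLabel f (vtx 1) (vtx p) = p := by
    intro p h1 h2
    rw [hlab 1 p le_rfl (by omega) (by omega) h2, max_eq_right (by omega),
      min_eq_left (by omega), Nat.descFactorial_one]
  -- the map into non-edges
  set F : ((_ : ℕ) × ℕ) → Sym2 (Fin n) := fun p =>
    if G.Adj (vtx p.1) (vtx p.2) then s(vtx 1, vtx (Nat.descFactorial p.2 p.1))
    else s(vtx p.1, vtx p.2) with hF
  -- key collision fact: if {h,j} is an edge, then {1, P(j,h)} is not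
  have hcoll : ∀ h j : ℕ, (⟨h, j⟩ : (_ : ℕ) × ℕ) ∈ T → G.Adj (vtx h) (vtx j) →
      ¬ G.Adj (vtx 1) (vtx (Nat.descFactorial j h)) := by
    intro h j hp hadj hadj1
    obtain ⟨h2, hj1, hjn, hjP, hPn⟩ := hbounds h j hp
    have hP3 : 3 ≤ Nat.descFactorial j h := by omega
    have heq : permEdgeLabel f (vtx h) (vtx j)
        = permEdgeLabel f (vtx 1) (vtx (Nat.descFactorial j h)) := by
      rw [hlab' h j (by omega) hj1 hjn, hlab1 _ (by omega) hPn]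
    have := hf _ _ _ _ hadj hadj1 heq
    rw [Sym2.eq_iff] at this
    rcases this with ⟨hA, -⟩ | ⟨-, hB⟩
    · have := hinjv h 1 (by omega) (by omega) le_rfl (by omega) hA
      omega
    · have := hinjv j 1 (by omega) hjn le_rfl (by omega) hB
      omega
  have hmaps : ∀ p ∈ T, F p ∈ Gᶜ.edgeFinset := by
    rintro ⟨h, j⟩ hp
    obtain ⟨h2, hj1, hjn, hjP, hPn⟩ := hbounds h j hp
    rw [SimpleGraph.mem_edgeFinset, hF]
    dsimp only
    by_cases hadj : G.Adj (vtx h) (vtx j)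
    · simp only [hadj, if_true]
      rw [SimpleGraph.mem_edgeSet, SimpleGraph.compl_adj]
      refine ⟨fun hc => ?_, hcoll h j hp hadj⟩
      have := hinjv 1 (Nat.descFactorial j h) le_rfl (by omega) (by omega) hPn hc
      omega
    · simp only [hadj, if_false]
      rw [SimpleGraph.mem_edgeSet, SimpleGraph.compl_adj]
      refine ⟨fun hc => ?_, hadj⟩
      have := hinjv h j (by omega) (by omega) (by omega) hjn hc
      omega
  have hFinj : ∀ p ∈ T, ∀ q ∈ T, F p = F q → p = q := by
    rintro ⟨h, j⟩ hp ⟨h', j'⟩ hq hpq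
    obtain ⟨h2, hj1, hjn, hjP, hPn⟩ := hbounds h j hp
    obtain ⟨h2', hj1', hjn', hjP', hPn'⟩ := hbounds h' j' hq
    -- reduce everything to: it suffices to show s(vtx h, vtx j) = s(vtx h', vtx j')
    have key : s(vtx h, vtx j) = s(vtx h', vtx j') → (⟨h, j⟩ : (_ : ℕ) × ℕ) = ⟨h', j'⟩ := by
      intro hs
      rw [Sym2.eq_iff] at hs
      rcases hs with ⟨hA, hB⟩ | ⟨hA, hB⟩
      · have e1 := hinjv h h' (by omega) (by omega) (by omega) (by omega) hA
        have e2 := hinjv j j' (by omega) hjn (by omega) hjn' hB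
        subst e1; subst e2; rfl
      · have e1 := hinjv h j' (by omega) (by omega) (by omega) hjn' hA
        have e2 := hinjv j h' (by omega) hjn (by omega) (by omega) hB
        omega
    rw [hF] at hpq
    dsimp only at hpq
    by_cases ha : G.Adj (vtx h) (vtx j) <;> by_cases hb : G.Adj (vtx h') (vtx j')
    · simp only [ha, hb, if_true] at hpq
      rw [Sym2.eq_iff] at hpq
      have hPP : Nat.descFactorial j h = Nat.descFactorial j' h' := by
        rcases hpq with ⟨-, hB⟩ | ⟨hA, -⟩
        · exact hinjv _ _ (by omega) hPn (by omega) hPn' hB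
        · have := hinjv 1 (Nat.descFactorial j' h') le_rfl (by omega) (by omega) hPn' hA
          omega
      have heq : permEdgeLabel f (vtx h) (vtx j) = permEdgeLabel f (vtx h') (vtx j') := by
        rw [hlab' h j (by omega) hj1 hjn, hlab' h' j' (by omega) hj1' hjn', hPP]
      exact key (hf _ _ _ _ ha hb heq)
    · simp only [ha, hb, if_true, if_false] at hpq
      exfalso
      rw [Sym2.eq_iff] at hpq
      rcases hpq with ⟨hA, -⟩ | ⟨hB, -⟩
      · have := hinjv 1 h' le_rfl (by omega) (by omega) (by omega) hA
        omega
      · have := hinjv 1 j' le_rfl (by omega) (by omega) hjn' hB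
        omega
    · simp only [ha, hb, if_true, if_false] at hpq
      exfalso
      rw [Sym2.eq_iff] at hpq
      rcases hpq with ⟨hA, -⟩ | ⟨-, hB⟩
      · have := hinjv h 1 (by omega) (by omega) le_rfl (by omega) hA
        omega
      · have := hinjv j 1 (by omega) hjn le_rfl (by omega) hB
        omega
    · simp only [ha, hb, if_false] at hpq
      exact key hpq
  -- counting
  have hcard1 : T.card ≤ Gᶜ.edgeFinset.card :=
    Finset.card_le_card_of_injOn F hmaps hFinj
  have hfin1 : G.edgeSet.Finite := Set.toFinite _
  have hfin2 : Gᶜ.edgeSet.Finite := Set.toFinite _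
  have hdisj : Disjoint G.edgeSet Gᶜ.edgeSet :=
    (SimpleGraph.disjoint_edgeSet).2 disjoint_compl_right
  have hunion : G.edgeSet ∪ Gᶜ.edgeSet = (⊤ : SimpleGraph (Fin n)).edgeSet := by
    rw [← SimpleGraph.edgeSet_sup, sup_compl_eq_top]
  have htot : G.edgeSet.ncard + Gᶜ.edgeSet.ncard = n * (n - 1) / 2 := by
    rw [← Set.ncard_union_eq hdisj hfin1 hfin2, hunion,
      Set.ncard_eq_toFinset_card' _]
    have : ((⊤ : SimpleGraph (Fin n)).edgeSet).toFinset
        = (⊤ : SimpleGraph (Fin n)).edgeFinset := rfl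
    rw [this, SimpleGraph.card_edgeFinset_top_eq_card_choose_two,
      Fintype.card_fin, Nat.choose_two_right]
  have hcard2 : Gᶜ.edgeSet.ncard = Gᶜ.edgeFinset.card := by
    rw [Set.ncard_eq_toFinset_card' _]
    rfl
  omega
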